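/- Let n be a positive integer, let T > 0 be a real number and let λ be a real number with 0 < λ < T. Let f : ℝ → ℝ be nonnegative and concave on the open interval (0,T). Then ∫_λ^T f(x)^n dx ≤ f(λ)^n · (λ/(n+1)) · ((T/λ)^{n+1} − 1). -/

import Mathlib

open MeasureTheory Set

lemma concave_chord_bound
    (T lam : ℝ) (hlam : 0 < lam) (hlamT : lam < T)
    (f : ℝ → ℝ) (hconc : ConcaveOn ℝ (Set.Ioo 0 T) f)
    (hnonneg : ∀ x ∈ Set.Ioo 0 T, 0 ≤ f x) :
    ∀ x ∈ Set.Ioo lam T, f x ≤ f lam / lam * x := by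
  intro x hx
  obtain ⟨hlx, hxT⟩ := hx
  have hx0 : 0 < x := hlam.trans hlx
  have key : ∀ ε ∈ Set.Ioo (0:ℝ) lam, (lam - ε) / (x - ε) * f x ≤ f lam := by
    intro ε hε
    have hεT : ε ∈ Set.Ioo (0:ℝ) T := ⟨hε.1, hε.2.trans (hlamT)⟩
    have hxε : 0 < x - ε := by linarith [hε.2]
    have ha : (0:ℝ) ≤ (x - lam) / (x - ε) := div_nonneg (by linarith) hxε.le
    have hb : (0:ℝ) ≤ (lam - ε) / (x - ε) := by
      apply div_nonneg _ hxε.le; linarith [hε.2]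
    have hab : (x - lam) / (x - ε) + (lam - ε) / (x - ε) = 1 := by
      field_simp
      ring
    have h := hconc.2 hεT ⟨hx0, hxT⟩ ha hb hab
    have hcomb : (x - lam) / (x - ε) * ε + (lam - ε) / (x - ε) * x = lam := by
      field_simp; ring
    simp only [smul_eq_mul, hcomb] at h
    have hfε : 0 ≤ f ε := hnonneg ε hεT
    nlinarith [h]
  have hlim : Filter.Tendsto (fun ε : ℝ => (lam - ε) / (x - ε) * f x)
      (nhdsWithin 0 (Set.Ioi 0)) (nhds (lam / x * f x)) := by
    apply Filter.Tendsto.mono_left _ nhdsWithin_le_nhds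
    have : ContinuousAt (fun ε : ℝ => (lam - ε) / (x - ε) * f x) 0 := by
      apply ContinuousAt.mul _ continuousAt_const
      apply ContinuousAt.div (by fun_prop) (by fun_prop)
      simp [hx0.ne']
    simpa using this.tendsto
  have h1 : lam / x * f x ≤ f lam := by
    refine le_of_tendsto hlim ?_
    filter_upwards [Ioo_mem_nhdsGT_of_mem (by constructor <;> simp [hlam] : (0:ℝ) ∈ Set.Ico 0 lam)] with ε hε
    exact key ε hε
  rw [div_mul_eq_mul_div, div_le_iff₀ hx0] at h1
  rw [div_mul_eq_mul_div, le_div_iff₀ hlam]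
  linarith

/-- Second displayed inequality in the proof of Lemma 4.10:
`∫_λ^T f^n ≤ f(λ)^n · (λ/(n+1)) · ((T/λ)^(n+1) − 1)`. -/
theorem concave_integral_pow_right_bound
    (n : ℕ) (hn : 0 < n) (T lam : ℝ) (hT : 0 < T) (hlam : 0 < lam) (hlamT : lam < T)
    (f : ℝ → ℝ) (hconc : ConcaveOn ℝ (Set.Ioo 0 T) f)
    (hnonneg : ∀ x ∈ Set.Ioo 0 T, 0 ≤ f x) :
    ∫ x in lam..T, f x ^ n ≤ f lam ^ n * (lam / ((n : ℝ) + 1)) * ((T / lam) ^ (n + 1) - 1) := by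
  have hlamIoo : lam ∈ Set.Ioo (0:ℝ) T := ⟨hlam, hlamT⟩
  have hflam : 0 ≤ f lam := hnonneg lam hlamIoo
  have hchord := concave_chord_bound T lam hlam hlamT f hconc hnonneg
  set c : ℝ := f lam / lam with hc
  have hc0 : 0 ≤ c := by positivity
  -- pointwise bound for the powers
  have hpow : ∀ x ∈ Set.Ioo lam T, f x ^ n ≤ (c * x) ^ n := by
    intro x hx
    have hxIoo : x ∈ Set.Ioo (0:ℝ) T := ⟨hlam.trans hx.1, hx.2⟩
    exact pow_le_pow_left₀ (hnonneg x hxIoo) (hchord x hx) n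
  -- continuity/measurability
  have hcontf : ContinuousOn f (Set.Ioo 0 T) := hconc.continuousOn isOpen_Ioo
  have hsub : Set.Ioo lam T ⊆ Set.Ioo (0:ℝ) T :=
    Set.Ioo_subset_Ioo hlam.le le_rfl
  have hcontfn : ContinuousOn (fun x => f x ^ n) (Set.Ioo lam T) :=
    ((hcontf.mono hsub).pow n)
  have hg_int : IntegrableOn (fun x => (c * x) ^ n) (Set.Ioo lam T) volume :=
    ((by continuity : Continuous fun x : ℝ => (c * x) ^ n).integrableOn_Icc).mono_set
      Set.Ioo_subset_Icc_self
  have hf_int : IntegrableOn (fun x => f x ^ n) (Set.Ioo lam T) volume := by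
    apply Integrable.mono' hg_int
      (hcontfn.aestronglyMeasurable measurableSet_Ioo)
    filter_upwards [ae_restrict_mem measurableSet_Ioo] with x hx
    have hxIoo : x ∈ Set.Ioo (0:ℝ) T := hsub hx
    rw [Real.norm_eq_abs, abs_of_nonneg (pow_nonneg (hnonneg x hxIoo) n)]
    exact hpow x hx
  have hle : lam ≤ T := hlamT.le
  -- compare integrals
  have hmono : ∫ x in lam..T, f x ^ n ≤ ∫ x in lam..T, (c * x) ^ n := by
    rw [intervalIntegral.integral_of_le hle, intervalIntegral.integral_of_le hle,
      integral_Ioc_eq_integral_Ioo, integral_Ioc_eq_integral_Ioo]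
    exact setIntegral_mono_on hf_int hg_int measurableSet_Ioo hpow
  refine hmono.trans_eq ?_
  have hcalc : ∫ x in lam..T, (c * x) ^ n = c ^ n * ((T ^ (n + 1) - lam ^ (n + 1)) / ((n : ℝ) + 1)) := by
    simp_rw [mul_pow]
    rw [intervalIntegral.integral_const_mul, integral_pow]
  rw [hcalc, hc]
  have hn1 : ((n : ℝ) + 1) ≠ 0 := by positivity
  have hlam0 : lam ≠ 0 := hlam.ne'
  field_simp
  have e1 : lam * lam⁻¹ = 1 := mul_inv_cancel₀ hlam0
  have e2 : lam ^ n * lam⁻¹ ^ n = 1 := by rw [← mul_pow, e1, one_pow]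
  linear_combination (-(f lam ^ n * lam)) * e2 - (f lam ^ n * lam⁻¹ ^ n * T * T ^ n) * e1
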